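/- Let f = (f_n) ∈ M_1, let η > 0, m ∈ ℕ and E ∈ D_m be given. Then there exist g = (g_i) ∈ M_1 and a sequence (F_i)_{i∈ℕ} ∈ K such that ‖f − g‖_1 < η, F_m = E, and limsup_{i→∞} g_i(F_i) = +∞, where g_i(F_i) = (1/P(F_i)) ∫_{F_i} g_i dP. -/

import Mathlib

set_option linter.unusedSectionVars false
set_option linter.unusedVariables false
set_option maxHeartbeats 1000000


open MeasureTheory Filter Set
open scoped ENNReal Topology

noncomputable section

namespace MartingalePaper

variable {Ω : Type}

/-- The discrete topology on `Set Ω`; each finite partition `D n` thus carries the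
discrete topology, and `ℕ → Set Ω` the product topology. -/
instance : TopologicalSpace (Set Ω) := ⊥

/-- `(D n)` is a sequence of finite measurable partitions of `Ω`, each refined by the next. -/
def IsPartitionSeq [MeasurableSpace Ω] (D : ℕ → Finset (Set Ω)) : Prop :=
  (∀ n, ∀ A ∈ D n, MeasurableSet A) ∧
  (∀ n, ∀ A ∈ D n, A.Nonempty) ∧
  (∀ n, (D n : Set (Set Ω)).PairwiseDisjoint id) ∧
  (∀ n, ⋃ A ∈ D n, A = (Set.univ : Set Ω)) ∧
  (∀ n, ∀ A ∈ D (n + 1), ∃ B ∈ D n, A ⊆ B)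

/-- Standing Assumptions (A). -/
def AssumptionA [MeasurableSpace Ω] (P : Measure Ω) (D : ℕ → Finset (Set Ω)) : Prop :=
  (∀ n, ∀ A ∈ D n, 0 < P A) ∧ (∀ n, ∀ A ∈ D n, ∃ m, n < m ∧ A ∉ D m)

/-- The compact metrizable space `K` associated to the filtration: decreasing chains of atoms. -/
abbrev Kt (D : ℕ → Finset (Set Ω)) : Type _ :=
  {x : ℕ → Set Ω // (∀ n, x n ∈ D n) ∧ ∀ n m : ℕ, n ≤ m → x m ⊆ x n}

/-- The function on `Ω` determined by the values `f n A` on the atoms `A ∈ D n`. -/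
def mval (D : ℕ → Finset (Set Ω)) (f : ℕ → Set Ω → ℝ) (n : ℕ) (w : Ω) : ℝ :=
  ∑ A ∈ D n, A.indicator (fun _ => f n A) w

/-- A martingale adapted to the filtration `(σ(D n))`, in its canonical representation by
the (a.e. constant) values on the atoms:  `f n A` is the value of the `n`-th function on
the atom `A ∈ D n`. -/
def IsMart [MeasurableSpace Ω] (P : Measure Ω) (D : ℕ → Finset (Set Ω))
    (f : ℕ → Set Ω → ℝ) : Prop :=
  (∀ n, ∀ A : Set Ω, A ∉ D n → f n A = 0) ∧
  ∀ n m : ℕ, n ≤ m → ∀ A ∈ D n,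
    ∫ w in A, mval D f n w ∂P = ∫ w in A, mval D f m w ∂P

/-- `‖f_n‖_{L^p}`. -/
def lpNorm [MeasurableSpace Ω] (P : Measure Ω) (D : ℕ → Finset (Set Ω)) (p : ℝ≥0∞)
    (f : ℕ → Set Ω → ℝ) (n : ℕ) : ℝ≥0∞ :=
  eLpNorm (mval D f n) p P

/-- `‖f‖_p = sup_n ‖f_n‖_{L^p}`. -/
def martNorm [MeasurableSpace Ω] (P : Measure Ω) (D : ℕ → Finset (Set Ω)) (p : ℝ≥0∞)
    (f : ℕ → Set Ω → ℝ) : ℝ≥0∞ :=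
  ⨆ n, lpNorm P D p f n

/-- `M_p`, the space of `L^p`-bounded martingales adapted to the filtration. -/
def Mart [MeasurableSpace Ω] (P : Measure Ω) (D : ℕ → Finset (Set Ω)) (p : ℝ≥0∞) : Type _ :=
  {f : ℕ → Set Ω → ℝ // IsMart P D f ∧ martNorm P D p f ≠ ∞}

/-- The norm topology on `M_p`: the topology generated by the balls of the norm `‖·‖_p`
(which is exactly the topology of this metric). -/
instance [MeasurableSpace Ω] (P : Measure Ω) (D : ℕ → Finset (Set Ω)) (p : ℝ≥0∞) :
    TopologicalSpace (Mart P D p) :=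
  TopologicalSpace.generateFrom
    {s | ∃ (f : Mart P D p) (ε : ℝ≥0∞), 0 < ε ∧
      s = {g : Mart P D p | martNorm P D p (fun k A => g.1 k A - f.1 k A) < ε}}

/-- `limsup f_n(x) = +∞` and `liminf f_n(x) = -∞`. -/
def DivergesAt (D : ℕ → Finset (Set Ω)) (f : ℕ → Set Ω → ℝ) (x : Kt D) : Prop :=
  Filter.limsup (fun n => ((f n (x.1 n) : ℝ) : EReal)) Filter.atTop = ⊤ ∧
  Filter.liminf (fun n => ((f n (x.1 n) : ℝ) : EReal)) Filter.atTop = ⊥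

/-! ### Auxiliary lemmas -/

section Aux

variable [MeasurableSpace Ω] {P : Measure Ω} {D : ℕ → Finset (Set Ω)}

lemma exists_supset (hpart : IsPartitionSeq D) {k l : ℕ} (hkl : k ≤ l) :
    ∀ C ∈ D l, ∃ B ∈ D k, C ⊆ B := by
  induction l, hkl using Nat.le_induction with
  | base => exact fun C hC => ⟨C, hC, subset_rfl⟩
  | succ l hl ih =>
    intro C hC
    obtain ⟨B', hB', hCB'⟩ := hpart.2.2.2.2 l C hC
    obtain ⟨B, hB, hB'B⟩ := ih B' hB'
    exact ⟨B, hB, hCB'.trans hB'B⟩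

lemma atom_eq (hpart : IsPartitionSeq D) {n : ℕ} {A B : Set Ω} (hA : A ∈ D n) (hB : B ∈ D n)
    {w : Ω} (hwA : w ∈ A) (hwB : w ∈ B) : A = B := by
  by_contra hne
  exact (hpart.2.2.1 n hA hB hne).le_bot ⟨hwA, hwB⟩

lemma exists_atom (hpart : IsPartitionSeq D) (n : ℕ) (w : Ω) : ∃ A ∈ D n, w ∈ A := by
  have : w ∈ ⋃ A ∈ D n, A := by rw [hpart.2.2.2.1 n]; trivial
  simpa using this

lemma subset_of_common (hpart : IsPartitionSeq D) {k l : ℕ} (hkl : k ≤ l) {B C : Set Ω}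
    (hB : B ∈ D k) (hC : C ∈ D l) {w : Ω} (hwB : w ∈ B) (hwC : w ∈ C) : C ⊆ B := by
  obtain ⟨B', hB', hCB'⟩ := exists_supset hpart hkl C hC
  rwa [← atom_eq hpart hB hB' hwB (hCB' hwC)] at hCB' 

def subAtoms (D : ℕ → Finset (Set Ω)) (N : ℕ) (B : Set Ω) : Finset (Set Ω) :=
  @Finset.filter _ (fun C => C ⊆ B) (Classical.decPred _) (D N)

lemma mem_subAtoms {N : ℕ} {B C : Set Ω} :
    C ∈ subAtoms D N B ↔ C ∈ D N ∧ C ⊆ B := by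
  simp [subAtoms, Finset.mem_filter]

lemma biUnion_subAtoms (hpart : IsPartitionSeq D) {k N : ℕ} (hkN : k ≤ N) {B : Set Ω}
    (hB : B ∈ D k) : ⋃ C ∈ subAtoms D N B, C = B := by
  apply Set.Subset.antisymm
  · exact Set.iUnion₂_subset fun C hC => (mem_subAtoms.mp hC).2
  · intro w hw
    obtain ⟨C, hC, hwC⟩ := exists_atom hpart N w
    have hCB : C ⊆ B := subset_of_common hpart hkN hB hC hw hwC
    exact Set.mem_biUnion (mem_subAtoms.mpr ⟨hC, hCB⟩) hwC

lemma pdisj_subAtoms (hpart : IsPartitionSeq D) (N : ℕ) (B : Set Ω) :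
    ((subAtoms D N B : Finset (Set Ω)) : Set (Set Ω)).PairwiseDisjoint id :=
  (hpart.2.2.1 N).subset (fun C hC => (mem_subAtoms.mp hC).1)

lemma mval_apply (hpart : IsPartitionSeq D) (F : ℕ → Set Ω → ℝ) {n : ℕ} {C : Set Ω}
    (hC : C ∈ D n) {w : Ω} (hw : w ∈ C) : mval D F n w = F n C := by
  unfold mval
  rw [Finset.sum_eq_single_of_mem C hC]
  · exact Set.indicator_of_mem hw _
  · intro A hA hne
    have : w ∉ A := fun hwA => hne (atom_eq hpart hA hC hwA hw)
    exact Set.indicator_of_notMem this _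

lemma integrable_mval (hpart : IsPartitionSeq D) [IsFiniteMeasure P]
    (F : ℕ → Set Ω → ℝ) (n : ℕ) : Integrable (mval D F n) P := by
  unfold mval
  exact integrable_finset_sum _ fun A hA =>
    (integrable_const (F n A)).indicator (hpart.1 n A hA)

lemma setIntegral_mval (hpart : IsPartitionSeq D) [IsFiniteMeasure P]
    (F : ℕ → Set Ω → ℝ) {n : ℕ} {C : Set Ω} (hC : C ∈ D n) :
    ∫ w in C, mval D F n w ∂P = F n C * (P C).toReal := by
  rw [setIntegral_congr_fun (hpart.1 n C hC) (fun w hw => mval_apply hpart F hC hw),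
    setIntegral_const, smul_eq_mul, mul_comm, measureReal_def]

lemma setIntegral_abs_mval (hpart : IsPartitionSeq D) [IsFiniteMeasure P]
    (F : ℕ → Set Ω → ℝ) {n : ℕ} {C : Set Ω} (hC : C ∈ D n) :
    ∫ w in C, |mval D F n w| ∂P = |F n C| * (P C).toReal := by
  have : Set.EqOn (fun w => |mval D F n w|) (fun _ => |F n C|) C := by
    intro w hw; simp [mval_apply hpart F hC hw]
  rw [setIntegral_congr_fun (hpart.1 n C hC) this, setIntegral_const, smul_eq_mul, mul_comm, measureReal_def]

lemma setIntegral_eq_sum_subAtoms (hpart : IsPartitionSeq D) {k N : ℕ} (hkN : k ≤ N)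
    {B : Set Ω} (hB : B ∈ D k) {g : Ω → ℝ} (hg : Integrable g P) :
    ∫ w in B, g w ∂P = ∑ C ∈ subAtoms D N B, ∫ w in C, g w ∂P := by
  conv_lhs => rw [← biUnion_subAtoms hpart hkN hB]
  exact integral_biUnion_finset _ (fun C hC => hpart.1 N C (mem_subAtoms.mp hC).1)
    (pdisj_subAtoms hpart N B) (fun C hC => hg.integrableOn)

lemma sum_measure_subAtoms (hpart : IsPartitionSeq D) [IsFiniteMeasure P] {k N : ℕ}
    (hkN : k ≤ N) {B : Set Ω} (hB : B ∈ D k) :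
    (P B).toReal = ∑ C ∈ subAtoms D N B, (P C).toReal := by
  rw [← ENNReal.toReal_sum (fun C _ => measure_ne_top P C)]
  congr 1
  conv_lhs => rw [← biUnion_subAtoms hpart hkN hB]
  exact measure_biUnion_finset (pdisj_subAtoms hpart N B)
    (fun C hC => hpart.1 N C (mem_subAtoms.mp hC).1)

lemma abs_setIntegral_mono (hpart : IsPartitionSeq D) [IsFiniteMeasure P]
    {f : ℕ → Set Ω → ℝ} (hf : IsMart P D f) {k N' N : ℕ} (h1 : k ≤ N') (h2 : N' ≤ N)
    {B : Set Ω} (hB : B ∈ D k) :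
    ∫ w in B, |mval D f N' w| ∂P ≤ ∫ w in B, |mval D f N w| ∂P := by
  rw [setIntegral_eq_sum_subAtoms hpart h1 hB ((integrable_mval hpart f N').abs),
    setIntegral_eq_sum_subAtoms hpart h1 hB ((integrable_mval hpart f N).abs)]
  apply Finset.sum_le_sum
  intro C hC
  obtain ⟨hCN', _⟩ := mem_subAtoms.mp hC
  calc ∫ w in C, |mval D f N' w| ∂P = |f N' C| * (P C).toReal :=
        setIntegral_abs_mval hpart f hCN'
    _ = |f N' C * (P C).toReal| := by
        rw [abs_mul, abs_of_nonneg ENNReal.toReal_nonneg]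
    _ = |∫ w in C, mval D f N' w ∂P| := by rw [setIntegral_mval hpart f hCN']
    _ = |∫ w in C, mval D f N w ∂P| := by rw [hf.2 N' N h2 C hCN']
    _ ≤ ∫ w in C, |mval D f N w| ∂P := by
        simpa [Real.norm_eq_abs] using
          norm_integral_le_integral_norm (μ := P.restrict C) (mval D f N)

lemma setIntegral_abs_le_mnorm (hpart : IsPartitionSeq D) [IsFiniteMeasure P]
    {f : ℕ → Set Ω → ℝ} (hfb : martNorm P D 1 f ≠ ∞) (j : ℕ) {B : Set Ω}
    (hB : MeasurableSet B) :
    ∫ w in B, |mval D f j w| ∂P ≤ (martNorm P D 1 f).toReal := by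
  have h1 : ∫ w in B, |mval D f j w| ∂P ≤ ∫ w, |mval D f j w| ∂P :=
    setIntegral_le_integral ((integrable_mval hpart f j).abs)
      (Filter.Eventually.of_forall fun w => abs_nonneg _)
  have h2 : ENNReal.ofReal (∫ w, |mval D f j w| ∂P) = lpNorm P D 1 f j := by
    rw [lpNorm, eLpNorm_one_eq_lintegral_enorm,
      ← ofReal_integral_norm_eq_lintegral_enorm (integrable_mval hpart f j)]
    simp [Real.norm_eq_abs]
  have h3 : lpNorm P D 1 f j ≤ martNorm P D 1 f := le_iSup _ j
  calc ∫ w in B, |mval D f j w| ∂P ≤ ∫ w, |mval D f j w| ∂P := h1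
    _ = (ENNReal.ofReal (∫ w, |mval D f j w| ∂P)).toReal := by
        rw [ENNReal.toReal_ofReal (integral_nonneg fun w => abs_nonneg _)]
    _ ≤ (martNorm P D 1 f).toReal := by
        rw [h2]
        exact ENNReal.toReal_mono hfb h3
        
end Aux

section Psi

variable [MeasurableSpace Ω] (P : Measure Ω) (D : ℕ → Finset (Set Ω)) (f : ℕ → Set Ω → ℝ)

/-- `psi B n = sup_{N ≥ n} ∫_B |f_N|`. -/
def psi (B : Set Ω) (n : ℕ) : ℝ :=
  ⨆ N : ℕ, ∫ w in B, |mval D f (n + N) w| ∂P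

def phi (B : Set Ω) (n : ℕ) : ℝ := (P B).toReal + psi P D f B n

variable {P D f} [IsFiniteMeasure P]

lemma psi_bdd (hpart : IsPartitionSeq D) (hfb : martNorm P D 1 f ≠ ∞) {B : Set Ω} (hB : MeasurableSet B) (n : ℕ) :
    BddAbove (Set.range fun N : ℕ => ∫ w in B, |mval D f (n + N) w| ∂P) := by
  refine ⟨(martNorm P D 1 f).toReal, ?_⟩
  rintro r ⟨N, rfl⟩
  exact setIntegral_abs_le_mnorm hpart hfb (n + N) hB

lemma le_psi (hpart : IsPartitionSeq D) (hfb : martNorm P D 1 f ≠ ∞) {B : Set Ω} (hB : MeasurableSet B) (n N : ℕ) :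
    ∫ w in B, |mval D f (n + N) w| ∂P ≤ psi P D f B n :=
  le_ciSup (psi_bdd hpart hfb hB n) N

lemma psi_nonneg (hpart : IsPartitionSeq D) (hfb : martNorm P D 1 f ≠ ∞) {B : Set Ω} (hB : MeasurableSet B) (n : ℕ) : 0 ≤ psi P D f B n :=
  le_trans (integral_nonneg fun w => abs_nonneg _) (le_psi hpart hfb hB n 0)

lemma phi_nonneg (hpart : IsPartitionSeq D) (hfb : martNorm P D 1 f ≠ ∞) {B : Set Ω} (hB : MeasurableSet B) (n : ℕ) : 0 ≤ phi P D f B n :=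
  add_nonneg ENNReal.toReal_nonneg (psi_nonneg hpart hfb hB n)

lemma sum_psi_le (hpart : IsPartitionSeq D) (hfb : martNorm P D 1 f ≠ ∞) (hf : IsMart P D f) {n : ℕ} {B : Set Ω} (hB : B ∈ D n) :
    ∑ C ∈ subAtoms D (n + 1) B, psi P D f C (n + 1) ≤ psi P D f B n := by
  have hmeasC : ∀ C ∈ subAtoms D (n + 1) B, MeasurableSet C := fun C hC =>
    hpart.1 (n + 1) C (mem_subAtoms.mp hC).1
  -- each summand is a limit of a monotone sequence
  have htend : Tendsto (fun t : ℕ => ∑ C ∈ subAtoms D (n + 1) B,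
      ∫ w in C, |mval D f (n + 1 + t) w| ∂P) atTop
      (𝓝 (∑ C ∈ subAtoms D (n + 1) B, psi P D f C (n + 1))) := by
    apply tendsto_finset_sum
    intro C hC
    exact tendsto_atTop_ciSup
      (fun t t' htt' => abs_setIntegral_mono hpart hf (Nat.le_add_right _ _)
        (by omega) (mem_subAtoms.mp hC).1)
      (psi_bdd hpart hfb (hmeasC C hC) (n + 1))
  refine le_of_tendsto htend (Filter.Eventually.of_forall fun t => ?_)
  have hdec : ∑ C ∈ subAtoms D (n + 1) B, ∫ w in C, |mval D f (n + 1 + t) w| ∂P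
      = ∫ w in B, |mval D f (n + 1 + t) w| ∂P :=
    (setIntegral_eq_sum_subAtoms hpart (Nat.le_succ n) hB
      ((integrable_mval hpart f (n + 1 + t)).abs)).symm
  rw [hdec, show n + 1 + t = n + (1 + t) by omega]
  exact le_psi hpart hfb (hpart.1 n B hB) n (1 + t)

lemma sum_phi_le (hpart : IsPartitionSeq D) (hfb : martNorm P D 1 f ≠ ∞) (hf : IsMart P D f) {n : ℕ} {B : Set Ω} (hB : B ∈ D n) :
    ∑ C ∈ subAtoms D (n + 1) B, phi P D f C (n + 1) ≤ phi P D f B n := by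
  unfold phi
  rw [Finset.sum_add_distrib]
  exact add_le_add (le_of_eq (sum_measure_subAtoms hpart (Nat.le_succ n) hB).symm)
    (sum_psi_le hpart hfb hf hB)

lemma subAtoms_nonempty (hpart : IsPartitionSeq D) {n : ℕ} {A : Set Ω} (hA : A ∈ D n) :
    (subAtoms D (n + 1) A).Nonempty := by
  obtain ⟨w, hw⟩ := hpart.2.1 n A hA
  obtain ⟨C, hC, hwC⟩ := exists_atom hpart (n + 1) w
  exact ⟨C, mem_subAtoms.mpr ⟨hC, subset_of_common hpart (Nat.le_succ n) hA hC hw hwC⟩⟩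

variable (P D f) in
/-- one minimizing step of the chain -/
def stepA (n : ℕ) (A : Set Ω) : Set Ω :=
  if h : (subAtoms D (n + 1) A).Nonempty then
    (Finset.exists_min_image (subAtoms D (n + 1) A) (fun B => phi P D f B (n + 1)) h).choose
  else A

lemma stepA_spec {n : ℕ} {A : Set Ω} (h : (subAtoms D (n + 1) A).Nonempty) :
    stepA P D f n A ∈ subAtoms D (n + 1) A ∧
      ∀ C ∈ subAtoms D (n + 1) A, phi P D f (stepA P D f n A) (n + 1) ≤ phi P D f C (n + 1) := by
  rw [stepA, dif_pos h]
  exact (Finset.exists_min_image (subAtoms D (n + 1) A) (fun B => phi P D f B (n + 1)) h).choose_spec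

variable (P D f) in
def chainX (m : ℕ) (E : Set Ω) : ℕ → Set Ω :=
  fun k => Nat.rec E (fun l A => stepA P D f (m + l) A) k

end Psi

section MvalAlg

variable {D : ℕ → Finset (Set Ω)}

lemma mval_add (D : ℕ → Finset (Set Ω)) (F G : ℕ → Set Ω → ℝ) (n : ℕ) :
    mval D (fun k A => F k A + G k A) n = fun w => mval D F n w + mval D G n w := by
  funext w
  unfold mval
  rw [← Finset.sum_add_distrib]
  exact Finset.sum_congr rfl fun A _ => by by_cases h : w ∈ A <;> simp [h]

lemma mval_neg (D : ℕ → Finset (Set Ω)) (F : ℕ → Set Ω → ℝ) (n : ℕ) :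
    mval D (fun k A => -(F k A)) n = fun w => -(mval D F n w) := by
  funext w
  unfold mval
  rw [← Finset.sum_neg_distrib]
  exact Finset.sum_congr rfl fun A _ => by by_cases h : w ∈ A <;> simp [h]

end MvalAlg

/-- Lemma (l:indukce): let `f ∈ M₁`, `η > 0`, `m ∈ ℕ` and `E ∈ D m`. Then there are a
martingale `g ∈ M₁` and a point `(F_i) ∈ K` such that `‖f - g‖₁ < η`, `F_m = E` and
`limsup g_i(F_i) = +∞`. -/
theorem statement19 [MeasurableSpace Ω] (P : Measure Ω) [IsProbabilityMeasure P]
    (D : ℕ → Finset (Set Ω)) (hpart : IsPartitionSeq D) (hA : AssumptionA P D)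
    (f : ℕ → Set Ω → ℝ) (hf : IsMart P D f) (hfb : martNorm P D 1 f ≠ ∞)
    (η : ℝ) (hη : 0 < η) (m : ℕ) (E : Set Ω) (hE : E ∈ D m) :
    ∃ g : ℕ → Set Ω → ℝ, IsMart P D g ∧ martNorm P D 1 g ≠ ∞ ∧
      martNorm P D 1 (fun k A => f k A - g k A) < ENNReal.ofReal η ∧
      ∃ x : Kt D, x.1 m = E ∧
        Filter.limsup (fun i => ((g i (x.1 i) : ℝ) : EReal)) Filter.atTop = ⊤ := by
  classical
  set ε : ℝ := η / 2 with hεdef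
  have hε : 0 < ε := half_pos hη
  -- the descending part of the chain
  set X : ℕ → Set Ω := chainX P D f m E with hXdef
  have hXsucc : ∀ k, X (k + 1) = stepA P D f (m + k) (X k) := fun k => rfl
  have hXmem : ∀ k, X k ∈ D (m + k) := by
    intro k
    induction k with
    | zero => exact hE
    | succ k ih =>
      have hne := subAtoms_nonempty hpart ih
      exact (mem_subAtoms.mp (stepA_spec (P := P) (f := f) hne).1).1
  have hXne : ∀ k, (subAtoms D (m + k + 1) (X k)).Nonempty :=
    fun k => subAtoms_nonempty hpart (hXmem k)
  have hXsub : ∀ k, X (k + 1) ⊆ X k :=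
    fun k => (mem_subAtoms.mp (stepA_spec (P := P) (f := f) (hXne k)).1).2
  have hXmin : ∀ k, ∀ C ∈ subAtoms D (m + k + 1) (X k),
      phi P D f (X (k + 1)) (m + k + 1) ≤ phi P D f C (m + k + 1) :=
    fun k => (stepA_spec (P := P) (f := f) (hXne k)).2
  have hXmono : ∀ k l, k ≤ l → X l ⊆ X k := by
    intro k l hkl
    induction l, hkl using Nat.le_induction with
    | base => exact subset_rfl
    | succ l hl ih => exact (hXsub l).trans ih
  have hmeasX : ∀ k, MeasurableSet (X k) := fun k => hpart.1 _ _ (hXmem k)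
  set s : ℕ → ℝ := fun k => phi P D f (X k) (m + k) with hsdef
  have hs_nonneg : ∀ k, 0 ≤ s k := fun k => phi_nonneg hpart hfb (hmeasX k) _
  have hs_anti : ∀ k, s (k + 1) ≤ s k := by
    intro k
    calc s (k + 1) ≤ ∑ C ∈ subAtoms D (m + k + 1) (X k), phi P D f C (m + k + 1) :=
          Finset.single_le_sum
            (fun C hC => phi_nonneg hpart hfb (hpart.1 _ _ (mem_subAtoms.mp hC).1) _)
            (stepA_spec (P := P) (f := f) (hXne k)).1
      _ ≤ s k := sum_phi_le hpart hfb hf (hXmem k)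
  have hhalf : ∀ k, X (k + 1) ≠ X k → 2 * s (k + 1) ≤ s k := by
    intro k hne
    obtain ⟨C', hC'mem, hC'ne⟩ : ∃ C' ∈ subAtoms D (m + k + 1) (X k), C' ≠ X (k + 1) := by
      by_contra hcon
      push_neg at hcon
      apply hne
      apply Set.Subset.antisymm (hXsub k)
      intro w hw
      obtain ⟨C, hC, hwC⟩ := exists_atom hpart (m + k + 1) w
      have hCsub : C ⊆ X k := subset_of_common hpart (Nat.le_succ _) (hXmem k) hC hw hwC
      have := hcon C (mem_subAtoms.mpr ⟨hC, hCsub⟩)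
      rw [← this]; exact hwC
    have h1 : phi P D f (X (k + 1)) (m + k + 1) + phi P D f C' (m + k + 1)
        ≤ ∑ C ∈ subAtoms D (m + k + 1) (X k), phi P D f C (m + k + 1) := by
      rw [← Finset.sum_pair (f := fun C => phi P D f C (m + k + 1)) (Ne.symm hC'ne)]
      apply Finset.sum_le_sum_of_subset_of_nonneg
      · intro C hC
        rcases Finset.mem_insert.mp hC with h | h
        · subst h; exact (stepA_spec (P := P) (f := f) (hXne k)).1
        · rw [Finset.mem_singleton.mp h]; exact hC'mem
      · intro C hC _
        exact phi_nonneg hpart hfb (hpart.1 _ _ (mem_subAtoms.mp hC).1) _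
    have h2 : phi P D f (X (k + 1)) (m + k + 1) ≤ phi P D f C' (m + k + 1) :=
      hXmin k C' hC'mem
    have h3 : ∑ C ∈ subAtoms D (m + k + 1) (X k), phi P D f C (m + k + 1) ≤ s k :=
      sum_phi_le hpart hfb hf (hXmem k)
    have : s (k + 1) = phi P D f (X (k + 1)) (m + k + 1) := rfl
    linarith
  have hsplit : ∀ k, ∃ l, k ≤ l ∧ X (l + 1) ≠ X l := by
    intro k
    by_contra hcon
    push_neg at hcon
    have hconst : ∀ l, k ≤ l → X l = X k := by
      intro l hl
      induction l, hl using Nat.le_induction with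
      | base => rfl
      | succ l hl ih => rw [hcon l hl, ih]
    obtain ⟨m', hm'gt, hm'not⟩ := hA.2 (m + k) (X k) (hXmem k)
    have hlk : k ≤ m' - m := by omega
    have hml : m + (m' - m) = m' := by omega
    apply hm'not
    have := hXmem (m' - m)
    rw [hconst (m' - m) hlk, hml] at this
    exact this
  -- s tends to 0
  have hbddS : BddBelow (Set.range s) := ⟨0, by rintro r ⟨k, rfl⟩; exact hs_nonneg k⟩
  have hantiS : Antitone s := antitone_nat_of_succ_le hs_anti
  have htc : Tendsto s atTop (𝓝 (⨅ k, s k)) := tendsto_atTop_ciInf hantiS hbddS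
  have hc0 : 0 ≤ ⨅ k, s k := le_ciInf hs_nonneg
  have hceq : (⨅ k, s k) = 0 := by
    by_contra hc
    have hcpos : 0 < ⨅ k, s k := lt_of_le_of_ne hc0 (Ne.symm hc)
    have hev : ∀ᶠ k in atTop, s k < 2 * ⨅ k, s k :=
      htc.eventually_lt_const (by linarith)
    obtain ⟨K, hK⟩ := eventually_atTop.mp hev
    obtain ⟨l, hlK, hlne⟩ := hsplit K
    have h1 := hhalf l hlne
    have h2 : (⨅ k, s k) ≤ s (l + 1) := ciInf_le hbddS (l + 1)
    have h3 := hK l hlK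
    linarith
  have hs0 : Tendsto s atTop (𝓝 0) := hceq ▸ htc
  -- the full chain
  have hanc : ∀ n, n < m → ∃ B ∈ D n, E ⊆ B := fun n hn => exists_supset hpart hn.le E hE
  set x : ℕ → Set Ω := fun n => if h : n < m then (hanc n h).choose else X (n - m) with hxdef
  have hxval_lt : ∀ n (h : n < m), x n = (hanc n h).choose := fun n h => dif_pos h
  have hxval_ge : ∀ n, m ≤ n → x n = X (n - m) := fun n h => dif_neg (by omega)
  have hanc_spec : ∀ n (h : n < m), x n ∈ D n ∧ E ⊆ x n := by
    intro n h
    rw [hxval_lt n h]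
    obtain ⟨h1, h2⟩ := (hanc n h).choose_spec
    exact ⟨h1, h2⟩
  have hxm : x m = E := by rw [hxval_ge m le_rfl, Nat.sub_self]; rfl
  have hxmem : ∀ n, x n ∈ D n := by
    intro n
    by_cases h : n < m
    · exact (hanc_spec n h).1
    · rw [hxval_ge n (by omega)]
      have e : m + (n - m) = n := by omega
      have h0 := hXmem (n - m)
      rw [e] at h0
      exact h0
  have hEne : E.Nonempty := hpart.2.1 m E hE
  have hxsub : ∀ n l : ℕ, n ≤ l → x l ⊆ x n := by
    intro n l hnl
    obtain ⟨w, hw⟩ := hEne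
    by_cases hl : l < m
    · have hn : n < m := by omega
      exact subset_of_common hpart hnl (hanc_spec n hn).1 (hxmem l)
        ((hanc_spec n hn).2 hw) ((hanc_spec l hl).2 hw)
    · have hXE : x l ⊆ E := by
        rw [hxval_ge l (by omega)]
        exact hXmono 0 (l - m) (Nat.zero_le _)
      by_cases hn : n < m
      · exact hXE.trans ((hanc_spec n hn).2)
      · rw [hxval_ge l (by omega), hxval_ge n (by omega)]
        exact hXmono (n - m) (l - m) (by omega)
  have hxkm : ∀ k, x (k + m) = X k := by
    intro k
    rw [hxval_ge (k + m) (by omega), Nat.add_sub_cancel]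
  -- the perturbation martingale
  set cst : ℕ → ℝ := fun n => ε / (P (x n)).toReal with hcstdef
  set h' : ℕ → Set Ω → ℝ := fun n A => if A = x n then cst n else 0 with hh'def
  have hPx_pos : ∀ n, 0 < (P (x n)).toReal :=
    fun n => ENNReal.toReal_pos (hA.1 n _ (hxmem n)).ne' (measure_ne_top P _)
  have hmval_h : ∀ n, mval D h' n = (x n).indicator (fun _ => cst n) := by
    intro n
    funext w
    unfold mval
    rw [Finset.sum_eq_single_of_mem (x n) (hxmem n)]
    · simp [hh'def]
    · intro A hAmem hAne
      simp [hh'def, hAne]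
  have hdisj_x : ∀ n A, A ∈ D n → A ≠ x n → A ∩ x n = ∅ := by
    intro n A hAmem hAne
    rw [← Set.disjoint_iff_inter_eq_empty]
    exact hpart.2.2.1 n hAmem (hxmem n) hAne
  have hsetint_h : ∀ n l, n ≤ l → ∀ A ∈ D n,
      ∫ w in A, mval D h' l w ∂P = if A = x n then ε else 0 := by
    intro n l hnl A hAmem
    rw [hmval_h l, setIntegral_indicator (hpart.1 l _ (hxmem l)), setIntegral_const,
      smul_eq_mul]
    by_cases hAx : A = x n
    · rw [if_pos hAx, hAx, Set.inter_eq_self_of_subset_right (hxsub n l hnl)]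
      show (P (x l)).toReal * (ε / (P (x l)).toReal) = ε
      rw [mul_comm, div_mul_cancel₀ _ (hPx_pos l).ne']
    · rw [if_neg hAx]
      have : A ∩ x l = ∅ := by
        have h1 : x l ⊆ x n := hxsub n l hnl
        have := hdisj_x n A hAmem hAx
        apply Set.eq_empty_of_subset_empty
        intro w hw
        exact this ▸ Set.mem_inter hw.1 (h1 hw.2)
      rw [this]
      simp
  -- the perturbed martingale g
  set g : ℕ → Set Ω → ℝ := fun n A => f n A + h' n A with hgdef
  have hmval_g : ∀ n, mval D g n = fun w => mval D f n w + mval D h' n w :=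
    fun n => mval_add D f h' n
  have hIsMartg : IsMart P D g := by
    constructor
    · intro n A hAnot
      have h1 : f n A = 0 := hf.1 n A hAnot
      have h2 : h' n A = 0 := by
        have hne : A ≠ x n := fun e => hAnot (by rw [e]; exact hxmem n)
        simp only [hh'def]
        exact if_neg hne
      simp [hgdef, h1, h2]
    · intro n l hnl A hAmem
      have key : ∀ j, n ≤ j → ∫ w in A, mval D g j w ∂P
          = (∫ w in A, mval D f j w ∂P) + if A = x n then ε else 0 := by
        intro j hnj
        rw [hmval_g j]
        rw [integral_add ((integrable_mval hpart f j).integrableOn)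
          ((integrable_mval hpart h' j).integrableOn)]
        rw [hsetint_h n j hnj A hAmem]
      rw [key n le_rfl, key l hnl, hf.2 n l hnl A hAmem]
  -- the L¹ norm of the perturbation
  have hlp_h : ∀ n, eLpNorm (mval D h' n) 1 P = ENNReal.ofReal ε := by
    intro n
    rw [hmval_h n, eLpNorm_indicator_const (hpart.1 n _ (hxmem n)) one_ne_zero
      ENNReal.one_ne_top]
    have e1 : ‖cst n‖ₑ = ENNReal.ofReal (cst n) := by
      rw [← Real.enorm_eq_ofReal (le_of_lt (div_pos hε (hPx_pos n)))]
    rw [e1]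
    have e2 : P (x n) ^ (1 / (1 : ℝ≥0∞).toReal) = P (x n) := by
      simp
    rw [e2, ← ENNReal.ofReal_toReal (measure_ne_top P (x n)), ← ENNReal.ofReal_mul
      (le_of_lt (div_pos hε (hPx_pos n)))]
    show ENNReal.ofReal (ε / (P (x n)).toReal * (P (x n)).toReal) = ENNReal.ofReal ε
    rw [div_mul_cancel₀ _ (hPx_pos n).ne']
  have haesm_f : ∀ n, AEStronglyMeasurable (mval D f n) P :=
    fun n => (integrable_mval hpart f n).aestronglyMeasurable
  have haesm_h : ∀ n, AEStronglyMeasurable (mval D h' n) P :=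
    fun n => (integrable_mval hpart h' n).aestronglyMeasurable
  have hgb : martNorm P D 1 g ≠ ∞ := by
    have hle : martNorm P D 1 g ≤ martNorm P D 1 f + ENNReal.ofReal ε := by
      apply iSup_le
      intro n
      rw [lpNorm, hmval_g n]
      calc eLpNorm (fun w => mval D f n w + mval D h' n w) 1 P
          ≤ eLpNorm (mval D f n) 1 P + eLpNorm (mval D h' n) 1 P :=
            eLpNorm_add_le (haesm_f n) (haesm_h n) le_rfl
        _ ≤ martNorm P D 1 f + ENNReal.ofReal ε :=
            add_le_add
              (le_iSup (fun j => lpNorm P D 1 f j) n :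
                lpNorm P D 1 f n ≤ martNorm P D 1 f) (hlp_h n).le
    exact (lt_of_le_of_lt hle (ENNReal.add_lt_top.mpr
      ⟨hfb.lt_top, ENNReal.ofReal_lt_top⟩)).ne
  -- the distance
  have hdiff : martNorm P D 1 (fun k A => f k A - g k A) < ENNReal.ofReal η := by
    have hfg : (fun (k : ℕ) (A : Set Ω) => f k A - g k A) = fun k A => -(h' k A) := by
      funext k A
      rw [hgdef]
      ring
    rw [hfg]
    have : ∀ n, lpNorm P D 1 (fun k A => -(h' k A)) n = ENNReal.ofReal ε := by
      intro n
      rw [lpNorm, mval_neg D h' n]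
      calc eLpNorm (fun w => -(mval D h' n w)) 1 P
          = eLpNorm (mval D h' n) 1 P := eLpNorm_neg _ _ _
        _ = ENNReal.ofReal ε := hlp_h n
    rw [martNorm]
    simp only [this, iSup_const]
    exact ENNReal.ofReal_lt_ofReal_iff hη |>.mpr (by rw [hεdef]; linarith)
  -- divergence along the chain
  set p : ℕ → ℝ := fun k => (P (X k)).toReal with hpdef
  have hp_pos : ∀ k, 0 < p k := by
    intro k
    have := hPx_pos (k + m)
    rwa [hxkm k] at this
  have hp_le : ∀ k, p k ≤ s k :=
    fun k => le_add_of_nonneg_right (psi_nonneg hpart hfb (hmeasX k) _)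
  have hp0 : Tendsto p atTop (𝓝 0) :=
    squeeze_zero (fun k => ENNReal.toReal_nonneg) hp_le hs0
  set u : ℕ → ℝ := fun k => f (m + k) (X k) with hudef
  have hu_le : ∀ k, |u k| * p k ≤ s k := by
    intro k
    have h1 : |u k| * p k = |∫ w in X k, mval D f (m + k) w ∂P| := by
      rw [setIntegral_mval hpart f (hXmem k), abs_mul,
        abs_of_nonneg ENNReal.toReal_nonneg]
    have h2 : |∫ w in X k, mval D f (m + k) w ∂P| ≤ ∫ w in X k, |mval D f (m + k) w| ∂P := by
      simpa [Real.norm_eq_abs] using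
        norm_integral_le_integral_norm (μ := P.restrict (X k)) (mval D f (m + k))
    have h3 : ∫ w in X k, |mval D f (m + k) w| ∂P ≤ psi P D f (X k) (m + k) :=
      le_psi hpart hfb (hmeasX k) (m + k) 0
    have h4 : psi P D f (X k) (m + k) ≤ s k :=
      le_add_of_nonneg_left ENNReal.toReal_nonneg
    rw [h1]
    exact le_trans h2 (le_trans h3 h4)
  have hu0 : Tendsto (fun k => |u k| * p k) atTop (𝓝 0) :=
    squeeze_zero (fun k => mul_nonneg (abs_nonneg _) (hp_pos k).le) hu_le hs0
  have hinv : Tendsto (fun k => (p k)⁻¹) atTop atTop := by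
    apply Filter.Tendsto.inv_tendsto_nhdsGT_zero
    exact tendsto_nhdsWithin_of_tendsto_nhds_of_eventually_within _ hp0
      (Eventually.of_forall fun k => hp_pos k)
  have hdiv : Tendsto (fun k => ε / 2 * (p k)⁻¹) atTop atTop :=
    hinv.const_mul_atTop (by linarith)
  have hTX : Tendsto (fun k => u k + ε / p k) atTop atTop := by
    apply tendsto_atTop_mono' atTop ?_ hdiv
    filter_upwards [hu0.eventually_lt_const (by linarith : (0:ℝ) < ε / 2)] with k hk
    have habs : |u k| ≤ ε / 2 / p k := (le_div_iff₀ (hp_pos k)).mpr hk.le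
    have h2 : ε / p k = ε / 2 / p k + ε / 2 / p k := by rw [← add_div, add_halves]
    have h3 : -(ε / 2 / p k) ≤ u k := by have := neg_abs_le (u k); linarith
    have h4 : ε / 2 * (p k)⁻¹ = ε / 2 / p k := (div_eq_mul_inv _ _).symm
    linarith
  have hT : Tendsto (fun i => f i (x i) + ε / (P (x i)).toReal) atTop atTop := by
    rw [← tendsto_add_atTop_iff_nat m]
    have hfun : (fun k => f (k + m) (x (k + m)) + ε / (P (x (k + m))).toReal)
        = fun k => u k + ε / p k := by
      funext k
      rw [hxkm k, Nat.add_comm k m]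
    exact hfun ▸ hTX
  refine ⟨g, hIsMartg, hgb, hdiff, ⟨x, hxmem, hxsub⟩, hxm, ?_⟩
  apply Filter.Tendsto.limsup_eq
  rw [EReal.tendsto_nhds_top_iff_real]
  intro r
  filter_upwards [hT.eventually_ge_atTop (r + 1)] with i hi
  have hgi : g i (x i) = f i (x i) + ε / (P (x i)).toReal := by
    rw [hgdef]
    simp [hh'def, hcstdef]
  show (r : EReal) < ((g i (x i) : ℝ) : EReal)
  rw [hgi]
  exact_mod_cast lt_of_lt_of_le (by linarith : r < r + 1) hi

end MartingalePaper
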